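/- Let e ∈ F_q^{n×m}, L̂ ∈ F_q^{n×μ} with rank L̂ = μ, and Ê ∈ F_q^{δ×m} with rank Ê = δ. Then rank [[L̂ , e],[0 , Ê]] = μ + δ + min{ rank(e − L̂·E⁽¹⁾ − L⁽²⁾·Ê) : E⁽¹⁾ ∈ F_q^{μ×m}, L⁽²⁾ ∈ F_q^{n×δ} }. -/

import Mathlib

set_option synthInstance.maxHeartbeats 1000000
set_option maxHeartbeats 1000000

open Matrix

private lemma exists_left_inverse' {F : Type*} [Field F] {n μ : ℕ}
    (L : Matrix (Fin n) (Fin μ) F)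
    (hL : L.rank = μ) : ∃ L' : Matrix (Fin μ) (Fin n) F, L' * L = 1 := by
  have hker : LinearMap.ker L.mulVecLin = ⊥ := by
    have h := LinearMap.finrank_range_add_finrank_ker L.mulVecLin
    rw [Module.finrank_fintype_fun_eq_card, Fintype.card_fin] at h
    have hr : Module.finrank F ↥(LinearMap.range L.mulVecLin) = μ := hL
    have : Module.finrank F ↥(LinearMap.ker L.mulVecLin) = 0 := by omega
    exact Submodule.finrank_eq_zero.mp this
  obtain ⟨g, hg⟩ := L.mulVecLin.exists_leftInverse_of_injective hker
  refine ⟨LinearMap.toMatrix' g, ?_⟩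
  apply Matrix.toLin'.injective
  rw [Matrix.toLin'_mul, Matrix.toLin'_toMatrix', Matrix.toLin'_one]
  exact hg

private lemma exists_right_inverse' {F : Type*} [Field F] {δ m : ℕ}
    (E : Matrix (Fin δ) (Fin m) F)
    (hE : E.rank = δ) : ∃ E' : Matrix (Fin m) (Fin δ) F, E * E' = 1 := by
  have hsurj : LinearMap.range E.mulVecLin = ⊤ := by
    apply Submodule.eq_top_of_finrank_eq
    rw [show Module.finrank F ↥(LinearMap.range E.mulVecLin) = E.rank from rfl, hE,
      Module.finrank_fintype_fun_eq_card, Fintype.card_fin]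
  obtain ⟨g, hg⟩ := E.mulVecLin.exists_rightInverse_of_surjective hsurj
  refine ⟨LinearMap.toMatrix' g, ?_⟩
  apply Matrix.toLin'.injective
  rw [Matrix.toLin'_mul, Matrix.toLin'_toMatrix', Matrix.toLin'_one]
  exact hg

private lemma rank_block_of_orth {F : Type*} [Field F] {n m μ δ : ℕ}
    (r : Matrix (Fin n) (Fin m) F)
    (L : Matrix (Fin n) (Fin μ) F) (L' : Matrix (Fin μ) (Fin n) F) (hL' : L' * L = 1)
    (E : Matrix (Fin δ) (Fin m) F) (E' : Matrix (Fin m) (Fin δ) F) (hE' : E * E' = 1)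
    (hLr : L' * r = 0) (hrE : r * E' = 0) :
    (fromBlocks L r 0 E).rank = μ + δ + r.rank := by
  set M : Matrix (Fin n ⊕ Fin δ) (Fin μ ⊕ Fin m) F := fromBlocks L r 0 E with hM
  set Kr := LinearMap.ker r.mulVecLin with hKr
  set Ke := LinearMap.ker E.mulVecLin with hKe
  -- characterize the kernel of M
  have hker : ∀ v : Fin μ ⊕ Fin m → F, M *ᵥ v = 0 ↔
      ((v ∘ Sum.inl) = 0 ∧ r *ᵥ (v ∘ Sum.inr) = 0 ∧ E *ᵥ (v ∘ Sum.inr) = 0) := by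
    intro v
    rw [hM, fromBlocks_mulVec]
    constructor
    · intro h
      have h1 : L *ᵥ (v ∘ Sum.inl) + r *ᵥ (v ∘ Sum.inr) = 0 := by
        funext i; exact congrFun h (Sum.inl i)
      have h2 : E *ᵥ (v ∘ Sum.inr) = 0 := by
        have := fun i => congrFun h (Sum.inr i)
        funext i; simpa using this i
      have h3 : (v ∘ Sum.inl) = 0 := by
        have := congrArg (fun w => L' *ᵥ w) h1
        simpa [mulVec_add, mulVec_mulVec, hL', hLr] using this
      refine ⟨h3, ?_, h2⟩
      rw [h3] at h1; simpa using h1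
    · rintro ⟨h3, h1, h2⟩
      rw [h1, h2, h3]
      funext i; cases i <;> simp
  -- linear equivalence between ker M and Kr ⊓ Ke
  have hequiv : (LinearMap.ker M.mulVecLin) ≃ₗ[F] ↥(Kr ⊓ Ke) :=
    { toFun := fun v => ⟨(v : Fin μ ⊕ Fin m → F) ∘ Sum.inr, by
        obtain ⟨h3, h1, h2⟩ := (hker v).mp v.2
        exact Submodule.mem_inf.mpr ⟨h1, h2⟩⟩
      map_add' := fun a b => rfl
      map_smul' := fun c a => rfl
      invFun := fun y => ⟨Sum.elim 0 (y : Fin m → F), by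
        have hy := Submodule.mem_inf.mp y.2
        show M *ᵥ _ = 0
        refine (hker _).mpr ⟨rfl, ?_, ?_⟩
        · have h := hy.1; change r *ᵥ (y : Fin m → F) = 0 at h; simpa using h
        · have h := hy.2; change E *ᵥ (y : Fin m → F) = 0 at h; simpa using h⟩
      left_inv := fun v => by
        apply Subtype.ext; funext i
        cases i with
        | inl i => exact (congrFun ((hker v).mp v.2).1 i).symm
        | inr i => rfl
      right_inv := fun y => Subtype.ext rfl }
  have hdim1 : Module.finrank F ↥(LinearMap.ker M.mulVecLin)
      = Module.finrank F ↥(Kr ⊓ Ke) := hequiv.finrank_eq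
  -- the restriction of E to Kr is surjective with kernel Kr ⊓ Ke
  let g : ↥Kr →ₗ[F] (Fin δ → F) := E.mulVecLin ∘ₗ Kr.subtype
  have hgrange : LinearMap.range g = ⊤ := by
    rw [LinearMap.range_eq_top]
    intro z
    refine ⟨⟨E' *ᵥ z, ?_⟩, ?_⟩
    · show r *ᵥ (E' *ᵥ z) = 0
      rw [mulVec_mulVec, hrE, zero_mulVec]
    · show E *ᵥ (E' *ᵥ z) = z
      rw [mulVec_mulVec, hE', one_mulVec]
  have hgker : LinearMap.ker g = Submodule.comap Kr.subtype (Kr ⊓ Ke) := by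
    ext x
    constructor
    · intro hx
      exact Submodule.mem_comap.mpr (Submodule.mem_inf.mpr ⟨x.2, hx⟩)
    · intro hx
      exact (Submodule.mem_inf.mp (Submodule.mem_comap.mp hx)).2
  have hdim2 : Module.finrank F ↥Kr = Module.finrank F ↥(Kr ⊓ Ke) + δ := by
    have h := LinearMap.finrank_range_add_finrank_ker g
    rw [hgrange, finrank_top, Module.finrank_fintype_fun_eq_card, Fintype.card_fin,
      hgker] at h
    have h2 : Module.finrank F ↥(Submodule.comap Kr.subtype (Kr ⊓ Ke))
        = Module.finrank F ↥(Kr ⊓ Ke) :=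
      (Submodule.comapSubtypeEquivOfLe (inf_le_left : Kr ⊓ Ke ≤ Kr)).finrank_eq
    omega
  have h1 := LinearMap.finrank_range_add_finrank_ker M.mulVecLin
  have h2 := LinearMap.finrank_range_add_finrank_ker r.mulVecLin
  rw [Module.finrank_fintype_fun_eq_card, Fintype.card_sum, Fintype.card_fin,
    Fintype.card_fin] at h1
  rw [Module.finrank_fintype_fun_eq_card, Fintype.card_fin] at h2
  have hrM : M.rank = Module.finrank F ↥(LinearMap.range M.mulVecLin) := rfl
  have hrr : r.rank = Module.finrank F ↥(LinearMap.range r.mulVecLin) := rfl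
  rw [hdim1] at h1
  rw [hdim2] at h2
  rw [hrM, hrr]
  omega

private lemma rank_block_shift' {F : Type*} [Field F] {n m μ δ : ℕ}
    (e : Matrix (Fin n) (Fin m) F)
    (L : Matrix (Fin n) (Fin μ) F) (E : Matrix (Fin δ) (Fin m) F)
    (E1 : Matrix (Fin μ) (Fin m) F) (L2 : Matrix (Fin n) (Fin δ) F) :
    (fromBlocks L e 0 E).rank = (fromBlocks L (e - L * E1 - L2 * E) 0 E).rank := by
  have hprod : fromBlocks (1 : Matrix (Fin n) (Fin n) F) (-L2) 0 (1 : Matrix (Fin δ) (Fin δ) F)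
      * fromBlocks L e 0 E
      * fromBlocks (1 : Matrix (Fin μ) (Fin μ) F) (-E1) 0 (1 : Matrix (Fin m) (Fin m) F)
      = fromBlocks L (e - L * E1 - L2 * E) 0 E := by
    rw [fromBlocks_multiply, fromBlocks_multiply]
    congr 1 <;> simp [Matrix.mul_sub, Matrix.sub_mul] <;> abel
  have hd1 : IsUnit (fromBlocks (1 : Matrix (Fin n) (Fin n) F) (-L2) 0
      (1 : Matrix (Fin δ) (Fin δ) F)).det := by
    rw [det_fromBlocks_zero₂₁]; simp
  have hd2 : IsUnit (fromBlocks (1 : Matrix (Fin μ) (Fin μ) F) (-E1) 0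
      (1 : Matrix (Fin m) (Fin m) F)).det := by
    rw [det_fromBlocks_zero₂₁]; simp
  calc (fromBlocks L e 0 E).rank
      = (fromBlocks (1 : Matrix (Fin n) (Fin n) F) (-L2) 0 (1 : Matrix (Fin δ) (Fin δ) F)
          * fromBlocks L e 0 E).rank := (rank_mul_eq_right_of_isUnit_det _ _ hd1).symm
    _ = (fromBlocks (1 : Matrix (Fin n) (Fin n) F) (-L2) 0 (1 : Matrix (Fin δ) (Fin δ) F)
          * fromBlocks L e 0 E
          * fromBlocks (1 : Matrix (Fin μ) (Fin μ) F) (-E1) 0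
            (1 : Matrix (Fin m) (Fin m) F)).rank := (rank_mul_eq_left_of_isUnit_det _ _ hd2).symm
    _ = (fromBlocks L (e - L * E1 - L2 * E) 0 E).rank := by rw [hprod]

/-- for `e ∈ F_q^{n×m}`, `L ∈ F_q^{n×μ}` of rank `μ` and
`E ∈ F_q^{δ×m}` of rank `δ`,
`rank [[L, e],[0, E]] = μ + δ + min { rank(e − L·E1 − L2·E) }`. -/
theorem rank_block_eq_min_rank
    {F : Type*} [Field F] [Fintype F] {n m μ δ : ℕ}
    (e : Matrix (Fin n) (Fin m) F)
    (L : Matrix (Fin n) (Fin μ) F) (hL : L.rank = μ)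
    (E : Matrix (Fin δ) (Fin m) F) (hE : E.rank = δ) :
    (Matrix.fromBlocks L e 0 E).rank
      = μ + δ + sInf {k : ℕ | ∃ (E1 : Matrix (Fin μ) (Fin m) F)
          (L2 : Matrix (Fin n) (Fin δ) F), k = (e - L * E1 - L2 * E).rank} := by
  obtain ⟨L', hL'⟩ := exists_left_inverse' L hL
  obtain ⟨E', hE'⟩ := exists_right_inverse' E hE
  set P : Matrix (Fin n) (Fin n) F := 1 - L * L' with hP
  set Q : Matrix (Fin m) (Fin m) F := 1 - E' * E with hQ
  have hPL : P * L = 0 := by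
    rw [hP, Matrix.sub_mul, Matrix.one_mul, Matrix.mul_assoc, hL', Matrix.mul_one, sub_self]
  have hEQ : E * Q = 0 := by
    rw [hQ, Matrix.mul_sub, Matrix.mul_one, ← Matrix.mul_assoc, hE', Matrix.one_mul, sub_self]
  -- the canonical residual
  set E10 : Matrix (Fin μ) (Fin m) F := L' * e with hE10
  set L20 : Matrix (Fin n) (Fin δ) F := (e - L * (L' * e)) * E' with hL20
  set r0 : Matrix (Fin n) (Fin m) F := e - L * E10 - L20 * E with hr0
  have hr0P : r0 = P * e * Q := by
    rw [hr0, hE10, hL20, hP, hQ]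
    simp only [Matrix.sub_mul, Matrix.mul_sub, Matrix.one_mul, Matrix.mul_one,
      Matrix.mul_assoc]
  -- for any residual, P * r * Q = P * e * Q
  have hPrQ : ∀ (E1 : Matrix (Fin μ) (Fin m) F) (L2 : Matrix (Fin n) (Fin δ) F),
      P * (e - L * E1 - L2 * E) * Q = P * e * Q := by
    intro E1 L2
    have t1 : P * (L * E1) * Q = 0 := by
      rw [← Matrix.mul_assoc, hPL, Matrix.zero_mul, Matrix.zero_mul]
    have t2 : P * (L2 * E) * Q = 0 := by
      rw [Matrix.mul_assoc P (L2 * E) Q, Matrix.mul_assoc L2 E Q, hEQ, Matrix.mul_zero,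
        Matrix.mul_zero]
    calc P * (e - L * E1 - L2 * E) * Q
        = P * e * Q - P * (L * E1) * Q - P * (L2 * E) * Q := by
          simp only [Matrix.mul_sub, Matrix.sub_mul]
      _ = P * e * Q := by rw [t1, t2, sub_zero, sub_zero]
  -- orthogonality of r0
  have hL'P : L' * P = 0 := by
    rw [hP, Matrix.mul_sub, Matrix.mul_one, ← Matrix.mul_assoc, hL', Matrix.one_mul, sub_self]
  have hQE' : Q * E' = 0 := by
    rw [hQ, Matrix.sub_mul, Matrix.one_mul, Matrix.mul_assoc, hE', Matrix.mul_one, sub_self]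
  have hLr0 : L' * r0 = 0 := by
    rw [hr0P, ← Matrix.mul_assoc, ← Matrix.mul_assoc, hL'P, Matrix.zero_mul, Matrix.zero_mul]
  have hr0E : r0 * E' = 0 := by
    rw [hr0P, Matrix.mul_assoc, hQE', Matrix.mul_zero]
  -- the infimum equals rank r0
  have hmem : r0.rank ∈ {k : ℕ | ∃ (E1 : Matrix (Fin μ) (Fin m) F)
      (L2 : Matrix (Fin n) (Fin δ) F), k = (e - L * E1 - L2 * E).rank} := ⟨E10, L20, rfl⟩
  have hinf : sInf {k : ℕ | ∃ (E1 : Matrix (Fin μ) (Fin m) F)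
      (L2 : Matrix (Fin n) (Fin δ) F), k = (e - L * E1 - L2 * E).rank} = r0.rank := by
    apply le_antisymm (Nat.sInf_le hmem)
    apply le_csInf ⟨_, hmem⟩
    rintro k ⟨E1, L2, rfl⟩
    have : r0.rank = (P * (e - L * E1 - L2 * E) * Q).rank := by rw [hPrQ, ← hr0P]
    rw [this]
    exact le_trans (rank_mul_le_left _ _) (rank_mul_le_right _ _)
  rw [hinf, rank_block_shift' e L E E10 L20, ← hr0]
  exact rank_block_of_orth r0 L L' hL' E E' hE' hLr0 hr0E
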